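/- (Sen's non-commutative union bound.) Let ρ be a positive semidefinite d×d complex matrix with trace 1, and let Π₁, Π₂, …, Π_N be orthogonal projections on ℂ^d (Hermitian matrices with Π_i² = Π_i). Then 1 - tr(Π_N ⋯ Π₂ Π₁ ρ Π₁ Π₂ ⋯ Π_N) ≤ 2 √( Σ_{i=1}^N tr((I - Π_i) ρ) ). -/

import Mathlib

open Matrix
open scoped ComplexOrder

open scoped InnerProductSpace

noncomputable def semb {d : ℕ} (A : Matrix (Fin d) (Fin d) ℂ) :
    EuclideanSpace ℂ (Fin d × Fin d) := WithLp.toLp 2 (fun p : Fin d × Fin d => A p.1 p.2)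

lemma semb_add {d : ℕ} (A B : Matrix (Fin d) (Fin d) ℂ) :
    semb (A + B) = semb A + semb B := rfl

lemma semb_sub {d : ℕ} (A B : Matrix (Fin d) (Fin d) ℂ) :
    semb (A - B) = semb A - semb B := rfl

lemma semb_zero {d : ℕ} : semb (0 : Matrix (Fin d) (Fin d) ℂ) = 0 := rfl

lemma inner_semb {d : ℕ} (A B : Matrix (Fin d) (Fin d) ℂ) :
    ⟪semb A, semb B⟫_ℂ = (Aᴴ * B).trace := by
  simp only [PiLp.inner_apply, RCLike.inner_apply, semb, WithLp.ofLp_toLp, Matrix.trace,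
    Matrix.diag_apply, Matrix.mul_apply, Matrix.conjTranspose_apply]
  rw [Fintype.sum_prod_type, Finset.sum_comm]
  simp [mul_comm]

lemma norm_semb_sq {d : ℕ} (A : Matrix (Fin d) (Fin d) ℂ) :
    ‖semb A‖ ^ 2 = ((Aᴴ * A).trace).re := by
  rw [← inner_semb]
  exact (inner_self_eq_norm_sq (𝕜 := ℂ) (semb A)).symm

lemma key_trace {d : ℕ} {Q s : Matrix (Fin d) (Fin d) ℂ} (hQ : Qᴴ * Q = Q) (hs : sᴴ = s) :
    ‖semb (Q * s)‖ ^ 2 = ((Q * (s * s)).trace).re := by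
  rw [norm_semb_sq, conjTranspose_mul, hs]
  congr 1
  calc (s * Qᴴ * (Q * s)).trace = (s * (Q * s)).trace := by
        rw [mul_assoc, ← mul_assoc Qᴴ, hQ]
    _ = ((Q * s) * s).trace := Matrix.trace_mul_comm _ _
    _ = (Q * (s * s)).trace := by rw [mul_assoc]

lemma norm_semb_mul_le {d : ℕ} {Q : Matrix (Fin d) (Fin d) ℂ}
    (hherm : Qᴴ = Q) (hidem : Q * Q = Q) (X : Matrix (Fin d) (Fin d) ℂ) :
    ‖semb (Q * X)‖ ≤ ‖semb X‖ := by
  have h1 : ‖semb (Q * X)‖ ^ 2 = ((Xᴴ * (Q * X)).trace).re := by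
    rw [norm_semb_sq, conjTranspose_mul, mul_assoc, ← mul_assoc Qᴴ, hherm, hidem]
  have hQ' : (1 - Q)ᴴ = 1 - Q := by
    rw [conjTranspose_sub, hherm, conjTranspose_one]
  have hQi : (1 - Q) * (1 - Q) = 1 - Q := by
    simp [sub_mul, mul_sub, hidem]
  have h2 : ‖semb ((1 - Q) * X)‖ ^ 2 = ((Xᴴ * ((1 - Q) * X)).trace).re := by
    rw [norm_semb_sq, conjTranspose_mul, mul_assoc, ← mul_assoc (1-Q)ᴴ, hQ', hQi]
  have h3 : Xᴴ * ((1 - Q) * X) = Xᴴ * X - Xᴴ * (Q * X) := by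
    rw [sub_mul, one_mul, mul_sub]
  have h4 : ‖semb ((1 - Q) * X)‖ ^ 2 = ‖semb X‖ ^ 2 - ‖semb (Q * X)‖ ^ 2 := by
    rw [h2, h3, norm_semb_sq, h1, Matrix.trace_sub, Complex.sub_re]
  nlinarith [sq_nonneg ‖semb ((1 - Q) * X)‖, norm_nonneg (semb X), norm_nonneg (semb (Q * X))]

lemma hybrid {d : ℕ} (s : Matrix (Fin d) (Fin d) ℂ) (L : List (Matrix (Fin d) (Fin d) ℂ))
    (hL : ∀ Q ∈ L, Qᴴ = Q ∧ Q * Q = Q) :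
    ‖semb (s - L.reverse.prod * s)‖ ^ 2 ≤ (L.map (fun Q => ‖semb (s - Q * s)‖ ^ 2)).sum := by
  induction L using List.reverseRecOn with
  | nil => simp [semb_zero]
  | append_singleton L Q ih =>
    have hQ := hL Q (by simp)
    have hL' : ∀ R ∈ L, Rᴴ = R ∧ R * R = R := fun R hR => hL R (by simp [hR])
    set u := L.reverse.prod * s with hu
    have hprod : (L ++ [Q]).reverse.prod = Q * L.reverse.prod := by
      simp
    have hdecomp : s - (L ++ [Q]).reverse.prod * s = (s - Q * s) + Q * (s - u) := by
      rw [hprod, mul_assoc, mul_sub]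
      abel
    have horth : ⟪semb (s - Q * s), semb (Q * (s - u))⟫_ℂ = 0 := by
      rw [inner_semb]
      have : (s - Q * s)ᴴ * (Q * (s - u)) = 0 := by
        have h1 : s - Q * s = (1 - Q) * s := by rw [sub_mul, one_mul]
        rw [h1, conjTranspose_mul, conjTranspose_sub, hQ.1, conjTranspose_one,
          mul_assoc, ← mul_assoc (1 - Q), sub_mul, one_mul, hQ.2, sub_self,
          Matrix.zero_mul, Matrix.mul_zero]
      rw [this, Matrix.trace_zero]
    have hnorm : ‖semb (s - (L ++ [Q]).reverse.prod * s)‖ ^ 2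
        = ‖semb (s - Q * s)‖ ^ 2 + ‖semb (Q * (s - u))‖ ^ 2 := by
      rw [hdecomp, semb_add, norm_add_sq (𝕜 := ℂ), horth]
      simp
    have hle : ‖semb (Q * (s - u))‖ ≤ ‖semb (s - u)‖ := norm_semb_mul_le hQ.1 hQ.2 _
    have hle2 : ‖semb (Q * (s - u))‖ ^ 2 ≤ ‖semb (s - u)‖ ^ 2 := by
      exact pow_le_pow_left₀ (norm_nonneg _) hle 2
    have := ih hL'
    rw [hnorm]
    rw [List.map_append, List.sum_append]
    simp only [List.map_singleton, List.sum_singleton]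
    linarith

/-- Sen's non-commutative union bound: for a density matrix `ρ` and orthogonal projections
`Proj₁, …, Proj_N`, `1 - tr(Proj_N ⋯ Proj₁ ρ Proj₁ ⋯ Proj_N) ≤ 2 √(Σ_i tr((I - Proj_i) ρ))`. -/
theorem sen_noncommutative_union_bound
    (d N : ℕ) (ρ : Matrix (Fin d) (Fin d) ℂ)
    (hρ : ρ.PosSemidef) (hτ : ρ.trace = 1)
    (Proj : Fin N → Matrix (Fin d) (Fin d) ℂ)
    (hherm : ∀ i, (Proj i).IsHermitian) (hproj : ∀ i, Proj i * Proj i = Proj i)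
    (P : Matrix (Fin d) (Fin d) ℂ)
    (hP : P = ((List.ofFn Proj).reverse).prod) :
    1 - ((P * ρ * Pᴴ).trace).re
      ≤ 2 * Real.sqrt (∑ i, (((1 - Proj i) * ρ).trace).re) := by
  open scoped MatrixOrder in
  set s := CFC.sqrt ρ with hs
  open scoped MatrixOrder in
  have hsh : sᴴ = s := (CFC.sqrt_nonneg ρ).posSemidef.1
  open scoped MatrixOrder in
  have hss : s * s = ρ := CFC.sqrt_mul_sqrt_self ρ hρ.nonneg
  -- norm of v
  have hv2 : ‖semb s‖ ^ 2 = 1 := by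
    rw [norm_semb_sq, hsh, hss, hτ]; rfl
  have hv : ‖semb s‖ = 1 := by
    rw [← Real.sqrt_sq (norm_nonneg (semb s)), hv2, Real.sqrt_one]
  -- norm of w
  have hw2 : ‖semb (P * s)‖ ^ 2 = ((P * ρ * Pᴴ).trace).re := by
    rw [norm_semb_sq, conjTranspose_mul, hsh]
    congr 1
    calc (s * Pᴴ * (P * s)).trace = ((P * s) * (s * Pᴴ)).trace := Matrix.trace_mul_comm _ _
      _ = (P * ρ * Pᴴ).trace := by rw [← hss]; noncomm_ring
  -- per-term identity
  have hterm : ∀ i, ‖semb (s - Proj i * s)‖ ^ 2 = (((1 - Proj i) * ρ).trace).re := by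
    intro i
    have h1 : s - Proj i * s = (1 - Proj i) * s := by rw [sub_mul, one_mul]
    have hQ : (1 - Proj i)ᴴ * (1 - Proj i) = 1 - Proj i := by
      rw [conjTranspose_sub, (hherm i), conjTranspose_one]
      simp [sub_mul, mul_sub, hproj i]
    rw [h1, key_trace hQ hsh, hss]
  -- hybrid bound
  have hL : ∀ Q ∈ List.ofFn Proj, Qᴴ = Q ∧ Q * Q = Q := by
    intro Q hQ
    rw [List.mem_ofFn] at hQ
    obtain ⟨i, rfl⟩ := hQ
    exact ⟨hherm i, hproj i⟩
  have hhyb := hybrid s (List.ofFn Proj) hL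
  rw [← hP] at hhyb
  have hsum : ((List.ofFn Proj).map (fun Q => ‖semb (s - Q * s)‖ ^ 2)).sum
      = ∑ i, (((1 - Proj i) * ρ).trace).re := by
    rw [List.map_ofFn, List.sum_ofFn]
    exact Finset.sum_congr rfl (fun i _ => hterm i)
  rw [hsum] at hhyb
  set S := ∑ i, (((1 - Proj i) * ρ).trace).re with hS
  -- S ≥ 0
  have hS0 : 0 ≤ S := le_trans (sq_nonneg _) hhyb
  have hdiff : semb (s - P * s) = semb s - semb (P * s) := semb_sub _ _
  have h5 : ‖semb s - semb (P * s)‖ ≤ Real.sqrt S := by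
    rw [← hdiff]
    rw [← Real.sqrt_sq (norm_nonneg (semb (s - P * s)))]
    exact Real.sqrt_le_sqrt hhyb
  have h6 : ‖semb s‖ - ‖semb (P * s)‖ ≤ ‖semb s - semb (P * s)‖ := norm_sub_norm_le _ _
  rw [← hw2]
  have h7 : 1 - ‖semb (P * s)‖ ≤ Real.sqrt S := by rw [← hv]; linarith
  nlinarith [sq_nonneg (‖semb (P * s)‖ - 1), norm_nonneg (semb (P * s)), Real.sqrt_nonneg S]
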